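/- arXiv:2210.07491 — 4 statements merged into one kernel-verified Lean document; each statement's English description precedes it below -/
import Mathlib

section
/- Let W be a real n×q matrix, let b_1, …, b_m ∈ ℝ^q, and let 𝐁 be the m×q matrix whose k-th row is b_kᵀ. Suppose ‖W b_k‖_2 ≤ γ for all k = 1, …, m and λ_max(𝐁ᵀ𝐁) ≤ C_B m / q for a constant C_B > 0. Then the q×(nm) block matrix M = ( b_1 b_1ᵀ Wᵀ b_2 b_2ᵀ Wᵀ ⋯ b_m b_mᵀ Wᵀ ), formed by horizontally concatenating the q×n blocks b_k b_kᵀ Wᵀ, satisfies ‖M‖_2 ≤ γ (C_B m / q)^{1/2}. -/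
open scoped BigOperators
open MeasureTheory Matrix

/-- Spectral norm (largest singular value) of a real matrix. -/
noncomputable def specNorm {a b : Type*} [Fintype a] [Fintype b] [DecidableEq b]
    (M : Matrix a b ℝ) : ℝ :=
  ‖LinearMap.toContinuousLinearMap (Matrix.toEuclideanLin M)‖

noncomputable def vnorm {a : Type*} [Fintype a] (v : a → ℝ) : ℝ :=
  Real.sqrt (∑ i, (v i) ^ 2)

/-- Largest eigenvalue of a symmetric matrix, via the Rayleigh quotient. -/
noncomputable def eigMax {a : Type*} [Fintype a] (M : Matrix a a ℝ) : ℝ :=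
  sSup {r | ∃ v : a → ℝ, (∑ i, (v i) ^ 2) = 1 ∧ r = ∑ i, v i * M.mulVec v i}

/-- The design matrix whose `k`-th row is `b k`. -/
noncomputable def designMat {m q : ℕ} (b : Fin m → Fin q → ℝ) :
    Matrix (Fin m) (Fin q) ℝ := Matrix.of fun k j => b k j


section Aux

variable {m q : ℕ}

/-- quadratic form of the Gram matrix. -/
lemma gram_quad (B : Matrix (Fin m) (Fin q) ℝ) (u : Fin q → ℝ) :
    ∑ i, u i * ((Bᵀ * B).mulVec u) i = ∑ k, (B.mulVec u k) ^ 2 := by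
  have h1 : ∑ i, u i * ((Bᵀ * B).mulVec u) i = u ⬝ᵥ ((Bᵀ * B) *ᵥ u) := rfl
  rw [h1, ← Matrix.mulVec_mulVec, Matrix.dotProduct_mulVec, Matrix.vecMul_transpose]
  simp [dotProduct, sq]

lemma raySet_bddAbove (B : Matrix (Fin m) (Fin q) ℝ) :
    BddAbove {r | ∃ v : Fin q → ℝ, (∑ i, (v i) ^ 2) = 1 ∧
      r = ∑ i, v i * (Bᵀ * B).mulVec v i} := by
  set A := Bᵀ * B
  refine ⟨∑ i, ∑ j, |A i j|, ?_⟩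
  rintro r ⟨v, hv, rfl⟩
  have hv1 : ∀ i, |v i| ≤ 1 := by
    intro i
    rw [← sq_le_one_iff_abs_le_one]
    calc v i ^ 2 ≤ ∑ i, (v i) ^ 2 :=
          Finset.single_le_sum (fun i _ => sq_nonneg (v i)) (Finset.mem_univ i)
      _ = 1 := hv
  calc ∑ i, v i * A.mulVec v i ≤ ∑ i, |v i * A.mulVec v i| :=
        Finset.sum_le_sum fun i _ => le_abs_self _
    _ ≤ ∑ i, ∑ j, |A i j| := by
        refine Finset.sum_le_sum fun i _ => ?_
        rw [abs_mul]
        calc |v i| * |A.mulVec v i| ≤ 1 * |A.mulVec v i| :=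
              mul_le_mul_of_nonneg_right (hv1 i) (abs_nonneg _)
          _ = |∑ j, A i j * v j| := by rw [one_mul]; rfl
          _ ≤ ∑ j, |A i j * v j| := Finset.abs_sum_le_sum_abs _ _
          _ ≤ ∑ j, |A i j| := by
              refine Finset.sum_le_sum fun j _ => ?_
              rw [abs_mul]
              calc |A i j| * |v j| ≤ |A i j| * 1 :=
                    mul_le_mul_of_nonneg_left (hv1 j) (abs_nonneg _)
                _ = |A i j| := mul_one _

lemma eigMax_gram_nonneg (hq : 0 < q) (B : Matrix (Fin m) (Fin q) ℝ) :
    0 ≤ eigMax (Bᵀ * B) := by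
  set v : Fin q → ℝ := Pi.single ⟨0, hq⟩ 1 with hvdef
  have hv : (∑ i, (v i) ^ 2) = 1 := by
    simp [hvdef, Pi.single_apply]
  have hmem : (∑ i, v i * (Bᵀ * B).mulVec v i) ∈
      {r | ∃ w : Fin q → ℝ, (∑ i, (w i) ^ 2) = 1 ∧
        r = ∑ i, w i * (Bᵀ * B).mulVec w i} := ⟨v, hv, rfl⟩
  have h0 : 0 ≤ ∑ i, v i * (Bᵀ * B).mulVec v i := by
    rw [gram_quad]
    exact Finset.sum_nonneg fun k _ => sq_nonneg _
  exact h0.trans (le_csSup (raySet_bddAbove B) hmem)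

/-- Rayleigh bound for arbitrary vectors. -/
lemma rayleigh_bound (B : Matrix (Fin m) (Fin q) ℝ) (u : Fin q → ℝ) :
    ∑ k, (B.mulVec u k) ^ 2 ≤ eigMax (Bᵀ * B) * ∑ i, (u i) ^ 2 := by
  set s := ∑ i, (u i) ^ 2 with hs
  have hs0 : 0 ≤ s := Finset.sum_nonneg fun i _ => sq_nonneg _
  rcases eq_or_lt_of_le hs0 with h | h
  · have hu : ∀ i, u i = 0 := by
      intro i
      have := (Finset.sum_eq_zero_iff_of_nonneg (fun i _ => sq_nonneg (u i))).1 h.symm i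
        (Finset.mem_univ i)
      exact pow_eq_zero_iff (two_ne_zero) |>.1 this
    have hu0 : u = 0 := funext hu
    simp [hu0, ← hs, h.symm]
  · set t := Real.sqrt s with ht
    have ht0 : 0 < t := Real.sqrt_pos.2 h
    have ht2 : t ^ 2 = s := Real.sq_sqrt hs0
    set w : Fin q → ℝ := fun i => u i / t with hw
    have hw1 : (∑ i, (w i) ^ 2) = 1 := by
      simp only [hw, div_pow, ← Finset.sum_div, ← hs, ht2.symm]
      rw [div_self (by positivity)]
    have hBw : ∀ k, B.mulVec w k = B.mulVec u k / t := by
      intro k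
      simp only [hw, Matrix.mulVec, dotProduct]
      rw [Finset.sum_div]
      exact Finset.sum_congr rfl fun j _ => (mul_div_assoc _ _ _).symm
    have hmem : (∑ i, w i * (Bᵀ * B).mulVec w i) ∈
        {r | ∃ v : Fin q → ℝ, (∑ i, (v i) ^ 2) = 1 ∧
          r = ∑ i, v i * (Bᵀ * B).mulVec v i} := ⟨w, hw1, rfl⟩
    have hle : (∑ i, w i * (Bᵀ * B).mulVec w i) ≤ eigMax (Bᵀ * B) :=
      le_csSup (raySet_bddAbove B) hmem
    rw [gram_quad] at hle
    have hsum : ∑ k, (B.mulVec w k) ^ 2 = (∑ k, (B.mulVec u k) ^ 2) / t ^ 2 := by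
      simp only [hBw, div_pow, ← Finset.sum_div]
    rw [hsum, div_le_iff₀ (by positivity)] at hle
    calc ∑ k, (B.mulVec u k) ^ 2 ≤ eigMax (Bᵀ * B) * t ^ 2 := hle
      _ = eigMax (Bᵀ * B) * s := by rw [ht2]

/-- key: `‖Bᵀ c‖² ≤ λ_max(BᵀB) ‖c‖²`. -/
lemma transpose_mulVec_sq_le (hq : 0 < q) (B : Matrix (Fin m) (Fin q) ℝ)
    (c : Fin m → ℝ) :
    ∑ i, (Bᵀ.mulVec c i) ^ 2 ≤ eigMax (Bᵀ * B) * ∑ k, (c k) ^ 2 := by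
  set u := Bᵀ.mulVec c with hu
  set S := ∑ i, (u i) ^ 2 with hS
  have hS0 : 0 ≤ S := Finset.sum_nonneg fun i _ => sq_nonneg _
  have hSid : S = (B.mulVec u) ⬝ᵥ c := by
    have : S = u ⬝ᵥ (Bᵀ *ᵥ c) := by simp [hS, hu, dotProduct, sq]
    rw [this, Matrix.dotProduct_mulVec, Matrix.vecMul_transpose]
  have hCS : S ^ 2 ≤ (∑ k, (B.mulVec u k) ^ 2) * ∑ k, (c k) ^ 2 := by
    rw [hSid]
    exact Finset.sum_mul_sq_le_sq_mul_sq _ _ _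
  have hray := rayleigh_bound B u
  have hc0 : 0 ≤ ∑ k, (c k) ^ 2 := Finset.sum_nonneg fun k _ => sq_nonneg _
  have hl0 : 0 ≤ eigMax (Bᵀ * B) := eigMax_gram_nonneg hq B
  rcases eq_or_lt_of_le hS0 with h | h
  · rw [← h]; positivity
  · have h2 : S ^ 2 ≤ (eigMax (Bᵀ * B) * S) * ∑ k, (c k) ^ 2 :=
      hCS.trans (mul_le_mul_of_nonneg_right hray hc0)
    have h3 : S * S ≤ (eigMax (Bᵀ * B) * ∑ k, (c k) ^ 2) * S := by
      rw [sq] at h2; linarith [h2]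
    exact le_of_mul_le_mul_right h3 h

end Aux

/-- **Lemma 2.** If `‖Wb_k‖₂ ≤ γ` for all `k` and `λ_max(𝐁ᵀ𝐁) ≤ C_B m/q`, then the
`q×(nm)` block matrix `(b_1b_1ᵀWᵀ ⋯ b_mb_mᵀWᵀ)` has spectral norm at most
`γ(C_B m/q)^{1/2}`. -/
theorem stmt2 {n q m : ℕ} (hn : 0 < n) (hq : 0 < q) (hm : 0 < m)
    (γ CB : ℝ) (hCB : 0 < CB)
    (W : Matrix (Fin n) (Fin q) ℝ) (b : Fin m → Fin q → ℝ)
    (hW : ∀ k, vnorm (W.mulVec (b k)) ≤ γ)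
    (hB : eigMax ((designMat b)ᵀ * designMat b) ≤ CB * m / q) :
    specNorm (Matrix.of fun (i : Fin q) (p : Fin m × Fin n) =>
        b p.1 i * (W.mulVec (b p.1)) p.2)
      ≤ γ * Real.sqrt (CB * m / q) := by
  set M : Matrix (Fin q) (Fin m × Fin n) ℝ :=
    Matrix.of fun (i : Fin q) (p : Fin m × Fin n) =>
      b p.1 i * (W.mulVec (b p.1)) p.2 with hM
  set lam : ℝ := CB * m / q with hlam
  have hlam0 : 0 ≤ lam := by positivity
  have hγ0 : 0 ≤ γ := le_trans (Real.sqrt_nonneg _) (hW ⟨0, hm⟩)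
  have hbound0 : 0 ≤ γ * Real.sqrt lam := mul_nonneg hγ0 (Real.sqrt_nonneg _)
  rw [specNorm]
  apply ContinuousLinearMap.opNorm_le_bound _ hbound0
  intro x
  rw [LinearMap.coe_toContinuousLinearMap']
  set v : Fin m × Fin n → ℝ := (WithLp.equiv 2 _) x with hvdef
  have hnx : ‖x‖ = Real.sqrt (∑ p, (v p) ^ 2) := by
    rw [EuclideanSpace.norm_eq]
    congr 1
    refine Finset.sum_congr rfl fun p _ => ?_
    rw [Real.norm_eq_abs, sq_abs]; rfl
  have hfx : ‖(Matrix.toEuclideanLin M) x‖ = Real.sqrt (∑ i, (M.mulVec v i) ^ 2) := by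
    rw [EuclideanSpace.norm_eq]
    congr 1
    refine Finset.sum_congr rfl fun i _ => ?_
    rw [Real.norm_eq_abs, sq_abs]; rfl
  rw [hfx, hnx]
  -- c k = ⟨W b_k, v_k⟩
  set c : Fin m → ℝ := fun k => ∑ j, W.mulVec (b k) j * v (k, j) with hc
  set B := designMat b with hBdef
  have hMv : M.mulVec v = Bᵀ.mulVec c := by
    funext i
    simp only [Matrix.mulVec, dotProduct]
    rw [Fintype.sum_prod_type]
    refine Finset.sum_congr rfl fun k _ => ?_
    simp only [hM, Matrix.of_apply, Matrix.transpose_apply, hBdef, designMat,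
      hc, Finset.mul_sum]
    exact Finset.sum_congr rfl fun j _ => mul_assoc _ _ _
  -- ‖c‖² ≤ γ² ‖v‖²
  have hck : ∀ k, (c k) ^ 2 ≤ γ ^ 2 * ∑ j, (v (k, j)) ^ 2 := by
    intro k
    have hCS : (c k) ^ 2 ≤ (∑ j, (W.mulVec (b k) j) ^ 2) * ∑ j, (v (k, j)) ^ 2 :=
      Finset.sum_mul_sq_le_sq_mul_sq _ _ _
    have hWk : (∑ j, (W.mulVec (b k) j) ^ 2) ≤ γ ^ 2 := by
      have h1 : Real.sqrt (∑ j, (W.mulVec (b k) j) ^ 2) ≤ γ := hW k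
      have h2 : 0 ≤ ∑ j, (W.mulVec (b k) j) ^ 2 :=
        Finset.sum_nonneg fun j _ => sq_nonneg _
      calc (∑ j, (W.mulVec (b k) j) ^ 2)
          = Real.sqrt (∑ j, (W.mulVec (b k) j) ^ 2) ^ 2 := (Real.sq_sqrt h2).symm
        _ ≤ γ ^ 2 := pow_le_pow_left₀ (Real.sqrt_nonneg _) h1 2
    exact hCS.trans (mul_le_mul_of_nonneg_right hWk
      (Finset.sum_nonneg fun j _ => sq_nonneg _))
  have hcsum : (∑ k, (c k) ^ 2) ≤ γ ^ 2 * ∑ p, (v p) ^ 2 := by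
    calc ∑ k, (c k) ^ 2 ≤ ∑ k, γ ^ 2 * ∑ j, (v (k, j)) ^ 2 :=
          Finset.sum_le_sum fun k _ => hck k
      _ = γ ^ 2 * ∑ p, (v p) ^ 2 := by
          rw [← Finset.mul_sum, Fintype.sum_prod_type]
  -- core inequality
  have hl0 : 0 ≤ eigMax (Bᵀ * B) := eigMax_gram_nonneg hq B
  have hcore : ∑ i, (M.mulVec v i) ^ 2 ≤ (γ * Real.sqrt lam) ^ 2 * ∑ p, (v p) ^ 2 := by
    have h1 : ∑ i, (M.mulVec v i) ^ 2 ≤ eigMax (Bᵀ * B) * ∑ k, (c k) ^ 2 := by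
      rw [hMv]; exact transpose_mulVec_sq_le hq B c
    have h2 : eigMax (Bᵀ * B) * ∑ k, (c k) ^ 2 ≤ lam * (γ ^ 2 * ∑ p, (v p) ^ 2) := by
      have hc0 : 0 ≤ ∑ k, (c k) ^ 2 := Finset.sum_nonneg fun k _ => sq_nonneg _
      calc eigMax (Bᵀ * B) * ∑ k, (c k) ^ 2 ≤ lam * ∑ k, (c k) ^ 2 :=
            mul_le_mul_of_nonneg_right hB hc0
        _ ≤ lam * (γ ^ 2 * ∑ p, (v p) ^ 2) :=
            mul_le_mul_of_nonneg_left hcsum hlam0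
    have h3 : (γ * Real.sqrt lam) ^ 2 = lam * γ ^ 2 := by
      rw [mul_pow, Real.sq_sqrt hlam0]; ring
    rw [h3, mul_assoc]
    exact h1.trans h2
  calc Real.sqrt (∑ i, (M.mulVec v i) ^ 2)
      ≤ Real.sqrt ((γ * Real.sqrt lam) ^ 2 * ∑ p, (v p) ^ 2) :=
        Real.sqrt_le_sqrt hcore
    _ = (γ * Real.sqrt lam) * Real.sqrt (∑ p, (v p) ^ 2) := by
        rw [Real.sqrt_mul (sq_nonneg _), Real.sqrt_sq hbound0]
end

section
/- Let x, y, z ∈ ℝ^n be vectors with xᵀz > 0. If min_{s ∈ {−1,1}} ‖s x − y‖_2 + ‖y − z‖_2 < ‖x‖_2, then xᵀy > 0. -/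
/-- **Lemma 3.** If `xᵀz > 0` and `min_{s∈{−1,1}} ‖sx − y‖ + ‖y − z‖ < ‖x‖`, then `xᵀy > 0`. -/
theorem stmt3 {n : ℕ} (x y z : EuclideanSpace ℝ (Fin n))
    (hxz : 0 < (inner ℝ x z : ℝ))
    (h : min ‖x - y‖ ‖(-x) - y‖ + ‖y - z‖ < ‖x‖) :
    0 < (inner ℝ x y : ℝ) := by
  by_contra hc
  push_neg at hc
  have h1 : ‖x‖ ≤ ‖x - y‖ := by
    have hs := @norm_sub_sq_real (EuclideanSpace ℝ (Fin n)) _ _ x y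
    nlinarith [norm_nonneg (x - y), norm_nonneg x, sq_nonneg ‖y‖]
  have h2 : ‖x‖ < ‖x + z‖ := by
    have hs := @norm_add_sq_real (EuclideanSpace ℝ (Fin n)) _ _ x z
    nlinarith [norm_nonneg (x + z), norm_nonneg x, sq_nonneg ‖z‖]
  have h3 : ‖x + z‖ ≤ ‖(-x) - y‖ + ‖y - z‖ := by
    calc ‖x + z‖ = ‖((-x) - y) + (y - z)‖ := by
          rw [show ((-x) - y) + (y - z) = -(x + z) by abel, norm_neg]
      _ ≤ _ := norm_add_le _ _
  rcases min_cases ‖x - y‖ ‖(-x) - y‖ with ⟨he, _⟩ | ⟨he, _⟩ <;> rw [he] at h <;>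
    linarith [norm_nonneg (y - z)]
end

section
/- Let P be a symmetric real n×n matrix of rank at most d, let E be a symmetric real n×n matrix, and let T be a best rank-at-most-d approximation of P + E in spectral norm (i.e., rank T ≤ d and ‖(P+E) − T‖_2 ≤ ‖(P+E) − M‖_2 for every matrix M of rank at most d). Then ‖T − P‖_F ≤ 2 √(2d) ‖E‖_2. -/
open scoped BigOperators
open MeasureTheory Matrix

noncomputable def frobSq {a b : Type*} [Fintype a] [Fintype b]
    (M : Matrix a b ℝ) : ℝ := ∑ i, ∑ j, (M i j) ^ 2

noncomputable def frobNorm {a b : Type*} [Fintype a] [Fintype b]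
    (M : Matrix a b ℝ) : ℝ := Real.sqrt (frobSq M)

lemma specNorm_eq_clm {n : ℕ} (M : Matrix (Fin n) (Fin n) ℝ) :
    specNorm M = ‖Matrix.toEuclideanCLM (𝕜 := ℝ) M‖ := rfl

lemma specNorm_nonneg' {n : ℕ} (M : Matrix (Fin n) (Fin n) ℝ) : 0 ≤ specNorm M := by
  rw [specNorm_eq_clm]; exact norm_nonneg _

lemma specNorm_add_le' {n : ℕ} (X Y : Matrix (Fin n) (Fin n) ℝ) :
    specNorm (X + Y) ≤ specNorm X + specNorm Y := by
  rw [specNorm_eq_clm, specNorm_eq_clm, specNorm_eq_clm, map_add]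
  exact norm_add_le _ _

lemma specNorm_neg' {n : ℕ} (X : Matrix (Fin n) (Fin n) ℝ) : specNorm (-X) = specNorm X := by
  rw [specNorm_eq_clm, specNorm_eq_clm, map_neg, norm_neg]

lemma my_rank_sub_le {n : ℕ} (X Y : Matrix (Fin n) (Fin n) ℝ) :
    (X - Y).rank ≤ X.rank + Y.rank := by
  have h : (X - Y).mulVecLin = X.mulVecLin - Y.mulVecLin := by
    ext v
    simp [Matrix.mulVecLin, Matrix.sub_mulVec]
  have hr : LinearMap.range (X - Y).mulVecLin ≤
      LinearMap.range X.mulVecLin ⊔ LinearMap.range Y.mulVecLin := by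
    rw [h]
    rintro x ⟨y, rfl⟩
    have h1 : X.mulVecLin y ∈ LinearMap.range X.mulVecLin := ⟨y, rfl⟩
    have h2 : Y.mulVecLin y ∈ LinearMap.range Y.mulVecLin := ⟨y, rfl⟩
    simpa [sub_eq_add_neg] using
      Submodule.add_mem_sup h1 (Submodule.neg_mem _ h2)
  calc (X - Y).rank ≤ Module.finrank ℝ
        (LinearMap.range X.mulVecLin ⊔ LinearMap.range Y.mulVecLin : Submodule ℝ (Fin n → ℝ)) :=
        Submodule.finrank_mono hr
    _ ≤ X.rank + Y.rank := Submodule.finrank_add_le_finrank_add_finrank _ _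

lemma frobSq_eq_trace {n : ℕ} (A : Matrix (Fin n) (Fin n) ℝ) :
    frobSq A = (Aᴴ * A).trace := by
  simp [frobSq, Matrix.trace, Matrix.mul_apply, Matrix.conjTranspose_apply, Matrix.diag, sq]
  exact Finset.sum_comm

lemma trace_eq_sum_eig {n : ℕ} {H : Matrix (Fin n) (Fin n) ℝ} (hH : H.IsHermitian) :
    H.trace = ∑ i, hH.eigenvalues i := by
  conv_lhs => rw [hH.spectral_theorem]
  rw [Unitary.conjStarAlgAut_apply, Matrix.trace_mul_cycle, Unitary.coe_star_mul_self, one_mul, Matrix.trace_diagonal]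
  simp

lemma eig_le {n : ℕ} (A : Matrix (Fin n) (Fin n) ℝ) (i : Fin n) :
    (Matrix.posSemidef_conjTranspose_mul_self A).1.eigenvalues i ≤ specNorm A ^ 2 := by
  set hH := Matrix.posSemidef_conjTranspose_mul_self A with hHdef
  set v := hH.1.eigenvectorBasis i with hv
  have hnv : ‖v‖ = 1 := hH.1.eigenvectorBasis.orthonormal.1 i
  have h1 : (Matrix.toEuclideanCLM (𝕜 := ℝ) (Aᴴ * A)) v = hH.1.eigenvalues i • v := by
    apply (WithLp.equiv 2 (Fin n → ℝ)).injective
    simp only [WithLp.equiv_apply, Matrix.ofLp_toEuclideanCLM, WithLp.ofLp_smul]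
    exact hH.1.mulVec_eigenvectorBasis i
  set f := Matrix.toEuclideanCLM (𝕜 := ℝ) A with hf
  have h2 : hH.1.eigenvalues i = ‖f v‖ ^ 2 := by
    have hc := congrArg (fun w => inner (𝕜 := ℝ) v w) h1
    simp only [inner_smul_right, real_inner_self_eq_norm_sq, hnv] at hc
    have hadj : (Matrix.toEuclideanCLM (𝕜 := ℝ) (Aᴴ * A)) v
        = (ContinuousLinearMap.adjoint f) (f v) := by
      rw [show Aᴴ * A = star A * A from rfl, _root_.map_mul, map_star,
        ContinuousLinearMap.star_eq_adjoint]
      rfl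
    rw [hadj, ContinuousLinearMap.adjoint_inner_right, real_inner_self_eq_norm_sq] at hc
    rw [hc]; ring
  rw [h2, specNorm_eq_clm, ← hf]
  have := f.le_opNorm v
  rw [hnv, mul_one] at this
  exact pow_le_pow_left₀ (norm_nonneg _) this 2

lemma frobSq_le_rank_mul {n : ℕ} (A : Matrix (Fin n) (Fin n) ℝ) :
    frobSq A ≤ (A.rank : ℝ) * specNorm A ^ 2 := by
  classical
  have hH := Matrix.posSemidef_conjTranspose_mul_self A
  rw [frobSq_eq_trace, trace_eq_sum_eig hH.1]
  set μ := hH.1.eigenvalues with hμ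
  have hsum : ∑ i, μ i = ∑ i ∈ Finset.univ.filter (fun i => μ i ≠ 0), μ i :=
    (Finset.sum_filter_ne_zero _).symm
  have hcard : (Finset.univ.filter (fun i => μ i ≠ 0)).card = A.rank := by
    rw [← Matrix.rank_conjTranspose_mul_self A, hH.1.rank_eq_card_non_zero_eigs,
      Fintype.card_subtype]
  calc ∑ i, μ i
      ≤ (Finset.univ.filter (fun i => μ i ≠ 0)).card • (specNorm A ^ 2) := by
        rw [hsum]
        exact Finset.sum_le_card_nsmul _ _ _ (fun i _ => eig_le A i)
    _ = (A.rank : ℝ) * specNorm A ^ 2 := by rw [hcard, nsmul_eq_mul]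

/-- Key intermediate estimate in Lemma 7: if `P` is symmetric of rank at most `d`, `E`
is symmetric, and `T` is a best rank-at-most-`d` spectral-norm approximation of `P + E`,
then `‖T − P‖_F ≤ 2√(2d)‖E‖₂`. -/
theorem stmt11 {n d : ℕ} (P E T : Matrix (Fin n) (Fin n) ℝ)
    (hP : P.IsSymm) (hE : E.IsSymm) (hPrank : P.rank ≤ d) (hTrank : T.rank ≤ d)
    (hbest : ∀ M : Matrix (Fin n) (Fin n) ℝ, M.rank ≤ d →
      specNorm ((P + E) - T) ≤ specNorm ((P + E) - M)) :
    frobNorm (T - P) ≤ 2 * Real.sqrt (2 * d) * specNorm E := by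
  set A := T - P with hA
  have hEnn : 0 ≤ specNorm E := specNorm_nonneg' E
  -- spectral norm bound
  have hs : specNorm A ≤ 2 * specNorm E := by
    have hdecomp : A = -((P + E) - T) + E := by rw [hA]; abel
    have h1 : specNorm A ≤ specNorm ((P + E) - T) + specNorm E := by
      calc specNorm A = specNorm (-((P + E) - T) + E) := by rw [← hdecomp]
        _ ≤ specNorm (-((P + E) - T)) + specNorm E := specNorm_add_le' _ _
        _ = specNorm ((P + E) - T) + specNorm E := by rw [specNorm_neg']
    have h2 : specNorm ((P + E) - T) ≤ specNorm E := by
      have := hbest P hPrank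
      rwa [add_sub_cancel_left] at this
    linarith
  -- rank bound
  have hrank : (A.rank : ℝ) ≤ 2 * d := by
    have : A.rank ≤ 2 * d := by
      rw [hA]
      calc (T - P).rank ≤ T.rank + P.rank := my_rank_sub_le T P
        _ ≤ 2 * d := by omega
    exact_mod_cast this
  -- Frobenius bound
  have hkey : frobSq A ≤ (2 * d : ℝ) * (2 * specNorm E) ^ 2 := by
    calc frobSq A ≤ (A.rank : ℝ) * specNorm A ^ 2 := frobSq_le_rank_mul A
      _ ≤ (2 * d : ℝ) * (2 * specNorm E) ^ 2 := by
          apply mul_le_mul hrank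
          · exact pow_le_pow_left₀ (specNorm_nonneg' A) hs 2
          · exact sq_nonneg _
          · positivity
  have hfin : frobNorm A ≤ Real.sqrt ((2 * d : ℝ) * (2 * specNorm E) ^ 2) :=
    Real.sqrt_le_sqrt hkey
  rw [Real.sqrt_mul (by positivity), Real.sqrt_sq (by positivity)] at hfin
  calc frobNorm A ≤ Real.sqrt (2 * d) * (2 * specNorm E) := hfin
    _ = 2 * Real.sqrt (2 * d) * specNorm E := by ring
end

section
/- Let Z : {x_1,…,x_m} → ℝ^{n×d} with γ_Z² = min_k λ_min(Z(x_k)ᵀZ(x_k)) > 0, let b_k = B(x_k) ∈ ℝ^q with design matrix 𝐁 (rows b_kᵀ) satisfying λ_min(𝐁ᵀ𝐁) ≥ c_B m/q > 0, and let Ŵ be a real n×q×d tensor with coordinate target W* = Z* ×_2 (𝐁ᵀ𝐁)^{−1}𝐁ᵀ, where Z* ∈ 𝒯^m(Z) minimizes ‖Ŵ − Z′ ×_2 (𝐁ᵀ𝐁)^{−1}𝐁ᵀ‖_F over Z′ ∈ 𝒯^m(Z). Then ‖Ŵ − W*‖_F² ≤ ( q / (2(√2 − 1) c_B m γ_Z²)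 ) Σ_{k=1}^m ‖ (Ŵ ×̄_2 b_k)(Ŵ ×̄_2 b_k)ᵀ − Z(x_k)Z(x_k)ᵀ ‖_F². -/
open scoped BigOperators
open MeasureTheory Matrix

/-- Smallest eigenvalue of a symmetric matrix, via the Rayleigh quotient. -/
noncomputable def eigMin {a : Type*} [Fintype a] (M : Matrix a a ℝ) : ℝ :=
  sInf {r | ∃ v : a → ℝ, (∑ i, (v i) ^ 2) = 1 ∧ r = ∑ i, v i * M.mulVec v i}

/-- The coordinate (least squares) map `(𝐁ᵀ𝐁)⁻¹𝐁ᵀ`. -/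
noncomputable def coordMap {m q : ℕ} (b : Fin m → Fin q → ℝ) :
    Matrix (Fin q) (Fin m) ℝ := ((designMat b)ᵀ * designMat b)⁻¹ * (designMat b)ᵀ

/-- `W ×̄₂ b`: the n×d matrix whose r-th column is `W_r b`. -/
noncomputable def bar2 {n q d : ℕ} (W : Fin d → Matrix (Fin n) (Fin q) ℝ)
    (b : Fin q → ℝ) : Matrix (Fin n) (Fin d) ℝ :=
  Matrix.of fun i r => (W r).mulVec b i

/-- `S ×₂ C`: apply the matrix `C` to each second-mode fiber of the n×m×d tensor `S`. -/
noncomputable def times2 {n m d q : ℕ} (S : Fin m → Matrix (Fin n) (Fin d) ℝ)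
    (C : Matrix (Fin q) (Fin m) ℝ) : Fin d → Matrix (Fin n) (Fin q) ℝ :=
  fun r => Matrix.of fun i j => ∑ k, C j k * S k i r

/-- Squared Frobenius norm of an n×q×d tensor given by its slices. -/
noncomputable def tFrobSq {n q d : ℕ} (W : Fin d → Matrix (Fin n) (Fin q) ℝ) : ℝ :=
  ∑ r, frobSq (W r)

lemma frobSq_nonneg {a b : Type*} [Fintype a] [Fintype b] (M : Matrix a b ℝ) : 0 ≤ frobSq M :=
  Finset.sum_nonneg fun _ _ => Finset.sum_nonneg fun _ _ => sq_nonneg _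

lemma frobSq_eq_trace_s16 {a b : Type*} [Fintype a] [Fintype b] (M : Matrix a b ℝ) :
    frobSq M = (Mᵀ * M).trace := by
  simp only [frobSq, Matrix.trace, Matrix.mul_apply, Matrix.diag, Matrix.transpose_apply, sq]
  exact Finset.sum_comm

lemma dot_mulVec_self (B : Matrix (Fin 5) (Fin 3) ℝ) (x : Fin 3 → ℝ) :
    (B *ᵥ x) ⬝ᵥ (B *ᵥ x) = x ⬝ᵥ (Bᵀ * B) *ᵥ x := by
  rw [← Matrix.mulVec_mulVec, Matrix.dotProduct_mulVec x Bᵀ, Matrix.vecMul_transpose]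

-- bddBelow of the Rayleigh set
lemma eigMin_le {a : Type*} [Fintype a] (M : Matrix a a ℝ) (v : a → ℝ)
    (hv : (∑ i, (v i) ^ 2) = 1) : eigMin M ≤ v ⬝ᵥ M.mulVec v := by
  have hb : BddBelow {r | ∃ v : a → ℝ, (∑ i, (v i) ^ 2) = 1 ∧ r = ∑ i, v i * M.mulVec v i} := by
    refine ⟨-(∑ i, ∑ j, |M i j|), ?_⟩
    rintro r ⟨w, hw, rfl⟩
    have hwb : ∀ i, |w i| ≤ 1 := by
      intro i
      have h1 : (w i)^2 ≤ 1 := hw ▸ Finset.single_le_sum (fun j _ => sq_nonneg (w j)) (Finset.mem_univ i)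
      nlinarith [abs_nonneg (w i), sq_abs (w i)]
    have : |∑ i, w i * M.mulVec w i| ≤ ∑ i, ∑ j, |M i j| := by
      calc |∑ i, w i * M.mulVec w i| ≤ ∑ i, |w i * M.mulVec w i| := Finset.abs_sum_le_sum_abs _ _
        _ ≤ ∑ i, ∑ j, |M i j| := by
            refine Finset.sum_le_sum fun i _ => ?_
            rw [abs_mul]
            calc |w i| * |M.mulVec w i| ≤ 1 * |M.mulVec w i| := by
                  exact mul_le_mul_of_nonneg_right (hwb i) (abs_nonneg _)
              _ = |∑ j, M i j * w j| := by rw [one_mul]; rfl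
              _ ≤ ∑ j, |M i j * w j| := Finset.abs_sum_le_sum_abs _ _
              _ ≤ ∑ j, |M i j| := by
                  refine Finset.sum_le_sum fun j _ => ?_
                  rw [abs_mul]
                  nlinarith [abs_nonneg (M i j), abs_nonneg (w j), hwb j]
    linarith [neg_abs_le (∑ i, w i * M.mulVec w i)]
  have hmem : v ⬝ᵥ M.mulVec v ∈ {r | ∃ v : a → ℝ, (∑ i, (v i) ^ 2) = 1 ∧ r = ∑ i, v i * M.mulVec v i} :=
    ⟨v, hv, rfl⟩
  exact csInf_le hb hmem

lemma rayleigh_lb {a : Type*} [Fintype a] (M : Matrix a a ℝ) (lb : ℝ)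
    (h : lb ≤ eigMin M) (v : a → ℝ) : lb * (∑ i, (v i) ^ 2) ≤ v ⬝ᵥ M.mulVec v := by
  by_cases hv : (∑ i, (v i) ^ 2) = 0
  · have hv0 : v = 0 := by
      funext i
      show v i = 0
      have h1 : (v i)^2 ≤ 0 := hv ▸ Finset.single_le_sum (fun j _ => sq_nonneg (v j)) (Finset.mem_univ i)
      nlinarith [sq_nonneg (v i)]
    simp [hv, hv0]
  · have hpos : 0 < ∑ i, (v i) ^ 2 :=
      lt_of_le_of_ne (Finset.sum_nonneg fun _ _ => sq_nonneg _) (Ne.symm hv)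
    set r : ℝ := Real.sqrt (∑ i, (v i) ^ 2) with hr
    have hrpos : 0 < r := Real.sqrt_pos.mpr hpos
    have hr2 : r ^ 2 = ∑ i, (v i) ^ 2 := Real.sq_sqrt hpos.le
    have hunit : (∑ i, ((r⁻¹ • v) i) ^ 2) = 1 := by
      simp only [Pi.smul_apply, smul_eq_mul, mul_pow]
      rw [← Finset.mul_sum, ← hr2]
      field_simp
    have h1 := le_trans h (eigMin_le M (r⁻¹ • v) hunit)
    have h2 : (r⁻¹ • v) ⬝ᵥ M.mulVec (r⁻¹ • v) = r⁻¹ * r⁻¹ * (v ⬝ᵥ M.mulVec v) := by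
      rw [Matrix.mulVec_smul, dotProduct_smul, smul_dotProduct]
      simp [smul_eq_mul]; ring
    rw [h2] at h1
    have : lb * (r^2) ≤ v ⬝ᵥ M.mulVec v := by
      have hrr : r⁻¹ * r⁻¹ = (r^2)⁻¹ := by rw [sq]; exact (mul_inv _ _).symm
      rw [hrr] at h1
      have hr2pos : 0 < r^2 := by positivity
      calc lb * r^2 ≤ ((r^2)⁻¹ * (v ⬝ᵥ M.mulVec v)) * r^2 := by
            exact mul_le_mul_of_nonneg_right h1 hr2pos.le
        _ = v ⬝ᵥ M.mulVec v := by field_simp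
    rwa [hr2] at this

section Polar
variable {d : ℕ}

noncomputable def reflMat (v : Fin d → ℝ) : Matrix (Fin d) (Fin d) ℝ :=
  1 - (2 : ℝ) • Matrix.vecMulVec v v

lemma vecMulVec_mul_vecMulVec (v : Fin d → ℝ) (hv : (∑ i, (v i)^2) = 1) :
    Matrix.vecMulVec v v * Matrix.vecMulVec v v = Matrix.vecMulVec v v := by
  ext i j
  simp only [Matrix.mul_apply, Matrix.vecMulVec_apply]
  have : ∀ k, (v i * v k) * (v k * v j) = (v i * v j) * (v k)^2 := by intro k; ring
  simp only [this, ← Finset.mul_sum, hv, mul_one]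

lemma reflMat_transpose (v : Fin d → ℝ) : (reflMat v)ᵀ = reflMat v := by
  have hsym : (Matrix.vecMulVec v v)ᵀ = Matrix.vecMulVec v v := by
    ext i j; simp [Matrix.vecMulVec_apply, mul_comm]
  simp [reflMat, Matrix.transpose_sub, Matrix.transpose_smul, hsym]

lemma reflMat_orth (v : Fin d → ℝ) (hv : (∑ i, (v i)^2) = 1) :
    (reflMat v)ᵀ * reflMat v = 1 := by
  set A := Matrix.vecMulVec v v with hA
  rw [reflMat_transpose, reflMat]
  have e1 : ((1 : Matrix (Fin d) (Fin d) ℝ) - (2:ℝ) • A) * (1 - (2:ℝ) • A)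
      = 1 - (2:ℝ) • A - (2:ℝ) • A + ((2:ℝ)*2) • (A * A) := by
    simp only [sub_mul, mul_sub, one_mul, mul_one, Matrix.smul_mul, Matrix.mul_smul, smul_smul]
    abel
  rw [e1, vecMulVec_mul_vecMulVec v hv]
  have h4 : ((2:ℝ)*2) • A = (2:ℝ) • A + (2:ℝ) • A := by
    rw [← add_smul]; norm_num
  rw [h4]; abel

lemma trace_vecMulVec_mul (v : Fin d → ℝ) (N : Matrix (Fin d) (Fin d) ℝ) :
    (Matrix.vecMulVec v v * N).trace = v ⬝ᵥ N.mulVec v := by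
  simp only [Matrix.trace, Matrix.diag, Matrix.mul_apply, Matrix.vecMulVec_apply,
    dotProduct, Matrix.mulVec]
  rw [Finset.sum_comm]
  refine Finset.sum_congr rfl fun k _ => ?_
  simp only [dotProduct, Finset.mul_sum]
  refine Finset.sum_congr rfl fun i _ => ?_
  ring

noncomputable def givensMat (i j : Fin d) (c s : ℝ) : Matrix (Fin d) (Fin d) ℝ :=
  Matrix.of fun k l =>
    if k = i then (if l = i then c else if l = j then -s else 0)
    else if k = j then (if l = i then s else if l = j then c else 0)
    else if k = l then 1 else 0

lemma sum_split (i j : Fin d) (hij : i ≠ j) (f : Fin d → ℝ) :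
    ∑ k, f k = f i + f j + ∑ k ∈ (Finset.univ.erase i).erase j, f k := by
  have h1 : ∑ k, f k = f i + ∑ k ∈ Finset.univ.erase i, f k :=
    (Finset.add_sum_erase _ f (Finset.mem_univ i)).symm
  have h2 : ∑ k ∈ Finset.univ.erase i, f k = f j + ∑ k ∈ (Finset.univ.erase i).erase j, f k :=
    (Finset.add_sum_erase _ f (Finset.mem_erase.mpr ⟨hij.symm, Finset.mem_univ j⟩)).symm
  rw [h1, h2]; ring

lemma givensMat_orth (i j : Fin d) (hij : i ≠ j) (c s : ℝ) (hcs : c^2 + s^2 = 1) :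
    (givensMat i j c s)ᵀ * givensMat i j c s = 1 := by
  ext a b
  simp only [Matrix.mul_apply, Matrix.transpose_apply, Matrix.one_apply, givensMat,
    Matrix.of_apply]
  rw [sum_split i j hij _]
  have hres : ∑ k ∈ (Finset.univ.erase i).erase j,
      ((if k = i then (if a = i then c else if a = j then -s else 0)
        else if k = j then (if a = i then s else if a = j then c else 0)
        else if k = a then 1 else 0) *
       (if k = i then (if b = i then c else if b = j then -s else 0)
        else if k = j then (if b = i then s else if b = j then c else 0)
        else if k = b then 1 else 0))
      = ∑ k ∈ (Finset.univ.erase i).erase j,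
        (if k = a then (if k = b then (1:ℝ) else 0) else 0) := by
    refine Finset.sum_congr rfl fun k hk => ?_
    rw [Finset.mem_erase, Finset.mem_erase] at hk
    obtain ⟨hkj, hki, -⟩ := hk
    simp only [if_neg hki, if_neg hkj]
    by_cases hka : k = a <;> by_cases hkb : k = b <;> simp [hka, hkb]
  rw [hres, Finset.sum_ite_eq' ((Finset.univ.erase i).erase j) a
    (fun k => if k = b then (1:ℝ) else 0)]
  simp only [Finset.mem_erase, Finset.mem_univ, and_true]
  have hji : j ≠ i := hij.symm
  by_cases hai : a = i <;> by_cases haj : a = j <;> by_cases hbi : b = i <;>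
    by_cases hbj : b = j <;> by_cases hab : a = b <;>
    simp_all <;> nlinarith [hcs]
end Polar

section P3
variable {d : ℕ}

lemma givens_trace (i j : Fin d) (hij : i ≠ j) (c s : ℝ) (N : Matrix (Fin d) (Fin d) ℝ) :
    ((givensMat i j c s)ᵀ * N).trace
      = N.trace - (N i i + N j j) + c * (N i i + N j j) + s * (N j i - N i j) := by
  have hG : ((givensMat i j c s)ᵀ * N).trace = ∑ l, ∑ k, givensMat i j c s l k * N l k := by
    simp only [Matrix.trace, Matrix.diag, Matrix.mul_apply, Matrix.transpose_apply]
    exact Finset.sum_comm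
  rw [hG, sum_split i j hij]
  have hrowi : ∑ k, givensMat i j c s i k * N i k = c * N i i + (-s) * N i j := by
    rw [sum_split i j hij]
    have hz : ∑ k ∈ (Finset.univ.erase i).erase j, givensMat i j c s i k * N i k = 0 := by
      refine Finset.sum_eq_zero fun k hk => ?_
      rw [Finset.mem_erase, Finset.mem_erase] at hk
      simp [givensMat, hk.2.1, hk.1]
    rw [hz]
    simp [givensMat, if_neg hij, if_neg (Ne.symm hij), add_zero]
  have hrowj : ∑ k, givensMat i j c s j k * N j k = s * N j i + c * N j j := by
    rw [sum_split i j hij]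
    have hz : ∑ k ∈ (Finset.univ.erase i).erase j, givensMat i j c s j k * N j k = 0 := by
      refine Finset.sum_eq_zero fun k hk => ?_
      rw [Finset.mem_erase, Finset.mem_erase] at hk
      simp [givensMat, hk.2.1, hk.1]
    rw [hz]
    simp [givensMat, if_neg hij, if_neg (Ne.symm hij), add_zero]
  have hrest : ∑ l ∈ (Finset.univ.erase i).erase j, (∑ k, givensMat i j c s l k * N l k)
      = ∑ l ∈ (Finset.univ.erase i).erase j, N l l := by
    refine Finset.sum_congr rfl fun l hl => ?_
    rw [Finset.mem_erase, Finset.mem_erase] at hl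
    have hterm : ∀ k, givensMat i j c s l k * N l k = (if l = k then N l k else 0) := by
      intro k
      by_cases h : l = k
      · subst h; simp [givensMat, hl.2.1, hl.1]
      · simp [givensMat, hl.2.1, hl.1, h]
    simp only [hterm]
    rw [Finset.sum_ite_eq Finset.univ l (fun k => N l k)]
    simp
  rw [hrowi, hrowj, hrest]
  have htr : N.trace = N i i + N j j + ∑ l ∈ (Finset.univ.erase i).erase j, N l l := by
    simpa [Matrix.trace, Matrix.diag] using sum_split i j hij (fun l => N l l)
  rw [htr]; ring

lemma sym_of_max (N : Matrix (Fin d) (Fin d) ℝ)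
    (hmax : ∀ O : Matrix (Fin d) (Fin d) ℝ, Oᵀ * O = 1 → (Oᵀ * N).trace ≤ N.trace) :
    Nᵀ = N := by
  ext a b
  rw [Matrix.transpose_apply]
  rcases eq_or_ne a b with rfl | hab
  · rfl
  obtain ⟨A, hA⟩ : ∃ A : ℝ, A = N a a + N b b := ⟨_, rfl⟩
  obtain ⟨B, hB⟩ : ∃ B : ℝ, B = N b a - N a b := ⟨_, rfl⟩
  have key : B = 0 := by
    set r := Real.sqrt (A^2 + B^2) with hrdef
    have hrnn : 0 ≤ r := Real.sqrt_nonneg _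
    have hr2 : r^2 = A^2 + B^2 := Real.sq_sqrt (by positivity)
    rcases eq_or_ne r 0 with hr0 | hr0
    · have hsum : A^2 + B^2 = 0 := by rw [← hr2, hr0]; ring
      have hB2 : B^2 = 0 := by nlinarith [sq_nonneg A, sq_nonneg B]
      exact sq_eq_zero_iff.mp hB2
    · have hrpos : 0 < r := lt_of_le_of_ne hrnn (Ne.symm hr0)
      have hcs : (A/r)^2 + (B/r)^2 = 1 := by
        field_simp
        linarith [hr2]
      have h1 := hmax _ (givensMat_orth a b hab (A/r) (B/r) hcs)
      rw [givens_trace a b hab (A/r) (B/r) N, ← hA, ← hB] at h1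
      have h2 : (A/r) * A + (B/r) * B ≤ A := by linarith
      have h3 : (A/r) * A + (B/r) * B = r := by
        field_simp
        linarith [hr2]
      have h4 : r ≤ A := by linarith
      have hB2 : B^2 ≤ 0 := by nlinarith
      exact sq_eq_zero_iff.mp (le_antisymm hB2 (sq_nonneg B))
  have : N b a - N a b = 0 := hB ▸ key
  linarith

lemma trace_refl_mul (v : Fin d → ℝ) (N : Matrix (Fin d) (Fin d) ℝ) :
    ((reflMat v)ᵀ * N).trace = N.trace - 2 * (v ⬝ᵥ N.mulVec v) := by
  rw [reflMat_transpose, reflMat, Matrix.sub_mul, Matrix.one_mul, Matrix.smul_mul,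
    Matrix.trace_sub, Matrix.trace_smul, trace_vecMulVec_mul]
  simp [smul_eq_mul]

lemma dot_smul_quad {a : Type*} [Fintype a] (M : Matrix a a ℝ) (c : ℝ) (v : a → ℝ) :
    (c • v) ⬝ᵥ M.mulVec (c • v) = c^2 * (v ⬝ᵥ M.mulVec v) := by
  rw [Matrix.mulVec_smul, dotProduct_smul, smul_dotProduct]
  simp [smul_eq_mul]; ring

lemma psd_of_max (N : Matrix (Fin d) (Fin d) ℝ)
    (hmax : ∀ O : Matrix (Fin d) (Fin d) ℝ, Oᵀ * O = 1 → (Oᵀ * N).trace ≤ N.trace) :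
    ∀ v : Fin d → ℝ, 0 ≤ v ⬝ᵥ N.mulVec v := by
  intro v
  rcases eq_or_ne (∑ i, (v i)^2) 0 with hv | hv
  · have hv0 : v = 0 := by
      funext i
      show v i = 0
      have h1 : (v i)^2 ≤ 0 := hv ▸ Finset.single_le_sum (fun j _ => sq_nonneg (v j)) (Finset.mem_univ i)
      nlinarith [sq_nonneg (v i)]
    simp [hv0]
  · have hpos : 0 < ∑ i, (v i)^2 :=
      lt_of_le_of_ne (Finset.sum_nonneg fun _ _ => sq_nonneg _) (Ne.symm hv)
    set r : ℝ := Real.sqrt (∑ i, (v i)^2) with hr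
    have hrpos : 0 < r := Real.sqrt_pos.mpr hpos
    have hr2 : r^2 = ∑ i, (v i)^2 := Real.sq_sqrt hpos.le
    have hunit : (∑ i, ((r⁻¹ • v) i)^2) = 1 := by
      simp only [Pi.smul_apply, smul_eq_mul, mul_pow]
      rw [← Finset.mul_sum, ← hr2]
      field_simp
    have h1 := hmax _ (reflMat_orth (r⁻¹ • v) hunit)
    rw [trace_refl_mul] at h1
    have h2 : 0 ≤ (r⁻¹ • v) ⬝ᵥ N.mulVec (r⁻¹ • v) := by linarith
    rw [dot_smul_quad] at h2
    have hinv : 0 < (r⁻¹)^2 := by positivity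
    nlinarith

lemma exists_max_orth (M : Matrix (Fin d) (Fin d) ℝ) :
    ∃ Q : Matrix (Fin d) (Fin d) ℝ, Qᵀ * Q = 1 ∧
      ∀ O : Matrix (Fin d) (Fin d) ℝ, Oᵀ * O = 1 → (Oᵀ * M).trace ≤ (Qᵀ * M).trace := by
  classical
  set K : Set (Matrix (Fin d) (Fin d) ℝ) := {Q | Qᵀ * Q = 1} with hK
  have hclosed : IsClosed K :=
    isClosed_eq ((continuous_id.matrix_transpose).matrix_mul continuous_id) continuous_const
  have hsub : K ⊆ Set.univ.pi fun _ : Fin d => Set.univ.pi fun _ : Fin d => Set.Icc (-1:ℝ) 1 := by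
    intro Q hQ
    refine Set.mem_pi.mpr ?_
    intro k _
    rw [Set.mem_pi]
    intro l _
    have h1 : (Qᵀ * Q) l l = 1 := by rw [hQ]; simp
    rw [Matrix.mul_apply] at h1
    simp only [Matrix.transpose_apply] at h1
    have h2 : Q k l * Q k l ≤ 1 := by
      rw [← h1]
      exact Finset.single_le_sum (fun x _ => mul_self_nonneg (Q x l)) (Finset.mem_univ k)
    constructor <;> nlinarith [mul_self_nonneg (Q k l)]
  have hbox : IsCompact (Set.univ.pi fun _ : Fin d => Set.univ.pi fun _ : Fin d => Set.Icc (-1:ℝ) 1) :=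
    isCompact_univ_pi fun _ => isCompact_univ_pi fun _ => isCompact_Icc
  have hcompact : IsCompact K := IsCompact.of_isClosed_subset hbox hclosed hsub
  have hne : K.Nonempty := ⟨1, by simp [hK]⟩
  have hcont : Continuous fun Q : Matrix (Fin d) (Fin d) ℝ => (Qᵀ * M).trace :=
    ((continuous_id.matrix_transpose).matrix_mul continuous_const).matrix_trace
  obtain ⟨Q, hQK, hQmax⟩ := hcompact.exists_isMaxOn hne hcont.continuousOn
  exact ⟨Q, hQK, fun O hO => hQmax hO⟩

lemma exists_polar (M : Matrix (Fin d) (Fin d) ℝ) :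
    ∃ Q : Matrix (Fin d) (Fin d) ℝ, Qᵀ * Q = 1 ∧ (Qᵀ * M)ᵀ = Qᵀ * M ∧
      ∀ v : Fin d → ℝ, 0 ≤ v ⬝ᵥ (Qᵀ * M).mulVec v := by
  obtain ⟨Q, hQ, hmax⟩ := exists_max_orth M
  have hNmax : ∀ O : Matrix (Fin d) (Fin d) ℝ, Oᵀ * O = 1 →
      (Oᵀ * (Qᵀ * M)).trace ≤ (Qᵀ * M).trace := by
    intro O hO
    have h1 : (Q * O)ᵀ * (Q * O) = 1 := by
      rw [Matrix.transpose_mul, Matrix.mul_assoc, ← Matrix.mul_assoc Qᵀ Q O, hQ, Matrix.one_mul, hO]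
    have h2 := hmax (Q * O) h1
    rwa [Matrix.transpose_mul, Matrix.mul_assoc] at h2
  exact ⟨Q, hQ, sym_of_max _ hNmax, psd_of_max _ hNmax⟩

end P3

section P4
variable {n d : ℕ}

lemma dot_self_eq_sum {a : Type*} [Fintype a] (x : a → ℝ) : x ⬝ᵥ x = ∑ i, (x i)^2 := by
  simp [dotProduct, sq]

lemma dot_mulVec_self' {a b : Type*} [Fintype a] [Fintype b]
    (B : Matrix a b ℝ) (x : b → ℝ) :
    (B *ᵥ x) ⬝ᵥ (B *ᵥ x) = x ⬝ᵥ (Bᵀ * B) *ᵥ x := by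
  rw [← Matrix.mulVec_mulVec, Matrix.dotProduct_mulVec x Bᵀ, Matrix.vecMul_transpose]

lemma tr4 (A B C D : Matrix (Fin n) (Fin d) ℝ) :
    ((A*Bᵀ)*(C*Dᵀ)).trace = ((Bᵀ*C)*(Dᵀ*A)).trace := by
  rw [Matrix.trace_mul_cycle A Bᵀ (C*Dᵀ), Matrix.mul_assoc C Dᵀ A,
    Matrix.trace_mul_cycle C (Dᵀ*A) Bᵀ]

lemma trace_quad (N : Matrix (Fin d) (Fin d) ℝ) (E : Matrix (Fin n) (Fin d) ℝ) :
    (N * (Eᵀ * E)).trace = ∑ i, (fun j => E i j) ⬝ᵥ N.mulVec (fun j => E i j) := by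
  calc (N * (Eᵀ * E)).trace = ∑ j, ∑ l, ∑ i, N j l * (E i l * E i j) := by
        simp only [Matrix.trace, Matrix.diag, Matrix.mul_apply, Matrix.transpose_apply,
          Finset.mul_sum]
    _ = ∑ j, ∑ i, ∑ l, N j l * (E i l * E i j) :=
        Finset.sum_congr rfl fun j _ => Finset.sum_comm
    _ = ∑ i, ∑ j, ∑ l, N j l * (E i l * E i j) := Finset.sum_comm
    _ = ∑ i, (fun j => E i j) ⬝ᵥ N.mulVec (fun j => E i j) := by
        simp only [dotProduct, Matrix.mulVec, Finset.mul_sum]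
        refine Finset.sum_congr rfl fun i _ => Finset.sum_congr rfl fun j _ =>
          Finset.sum_congr rfl fun l _ => ?_
        ring

lemma quad_trace_nonneg (N : Matrix (Fin d) (Fin d) ℝ) (E : Matrix (Fin n) (Fin d) ℝ)
    (hpsd : ∀ v : Fin d → ℝ, 0 ≤ v ⬝ᵥ N.mulVec v) :
    0 ≤ (N * (Eᵀ * E)).trace := by
  rw [trace_quad]
  exact Finset.sum_nonneg fun i _ => hpsd _

lemma quad_trace_ge (G : Matrix (Fin d) (Fin d) ℝ) (E : Matrix (Fin n) (Fin d) ℝ) (γ : ℝ)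
    (hG : ∀ v : Fin d → ℝ, γ^2 * (∑ i, (v i)^2) ≤ v ⬝ᵥ G.mulVec v) :
    γ^2 * frobSq E ≤ (G * (Eᵀ * E)).trace := by
  rw [trace_quad, frobSq, Finset.mul_sum]
  exact Finset.sum_le_sum fun i _ => hG _

lemma trace_mul_symm {k : ℕ} (S F : Matrix (Fin k) (Fin k) ℝ) (hF : Fᵀ = F) :
    (S*F).trace = ∑ i, ∑ j, S i j * F i j := by
  simp only [Matrix.trace, Matrix.diag, Matrix.mul_apply]
  refine Finset.sum_congr rfl fun i _ => Finset.sum_congr rfl fun j _ => ?_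
  have h5 : F j i = F i j := (congrFun (congrFun hF j) i).symm
  rw [h5]

lemma frob_cauchy {k : ℕ} (S F : Matrix (Fin k) (Fin k) ℝ) :
    (∑ i, ∑ j, S i j * F i j)^2 ≤ frobSq S * frobSq F := by
  have hcs := Finset.sum_mul_sq_le_sq_mul_sq Finset.univ
    (fun p : (Fin k) × (Fin k) => S p.1 p.2) (fun p => F p.1 p.2)
  simpa [Fintype.sum_prod_type, frobSq] using hcs

lemma frob_identity (X E : Matrix (Fin n) (Fin d) ℝ)
    (hsym : (Xᵀ*E)ᵀ = Xᵀ*E) :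
    frobSq (E*Xᵀ + X*Eᵀ + E*Eᵀ)
      = 2*((Xᵀ*X)*(Eᵀ*E)).trace + 2*frobSq (Xᵀ*E) + 4*((Xᵀ*E)*(Eᵀ*E)).trace
        + frobSq (Eᵀ*E) := by
  have hEX : Eᵀ*X = Xᵀ*E := by
    rw [← hsym, Matrix.transpose_mul, Matrix.transpose_transpose]
  have hFsym : (Eᵀ*E)ᵀ = Eᵀ*E := by rw [Matrix.transpose_mul, Matrix.transpose_transpose]
  have hS : frobSq (Xᵀ*E) = ((Xᵀ*E)*(Xᵀ*E)).trace := by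
    rw [frobSq_eq_trace_s16, hsym]
  have hF : frobSq (Eᵀ*E) = ((Eᵀ*E)*(Eᵀ*E)).trace := by
    rw [frobSq_eq_trace_s16, hFsym]
  rw [frobSq_eq_trace_s16, hS, hF]
  have hDt : (E*Xᵀ + X*Eᵀ + E*Eᵀ)ᵀ = X*Eᵀ + E*Xᵀ + E*Eᵀ := by
    simp [Matrix.transpose_add, Matrix.transpose_mul]
  rw [hDt]
  simp only [Matrix.add_mul, Matrix.mul_add, Matrix.trace_add]
  rw [tr4 X E E X, tr4 X E X E, tr4 X E E E, tr4 E X E X, tr4 E X X E, tr4 E X E E,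
    tr4 E E E X, tr4 E E X E, tr4 E E E E]
  rw [hEX]
  rw [Matrix.trace_mul_comm (Eᵀ*E) (Xᵀ*X), Matrix.trace_mul_comm (Eᵀ*E) (Xᵀ*E)]
  ring

lemma core_arith (a2 s2 f2 t e2 γ : ℝ) (h1 : 0 ≤ a2 + t) (h2 : γ^2 * e2 ≤ a2)
    (h3 : t^2 ≤ s2 * f2) (hs2 : 0 ≤ s2) (hf2 : 0 ≤ f2) :
    2*(Real.sqrt 2 - 1)*γ^2*e2 ≤ 2*a2 + 2*s2 + 4*t + f2 := by
  have hsq : (Real.sqrt 2)^2 = 2 := Real.sq_sqrt (by norm_num)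
  have hnn : 0 ≤ Real.sqrt 2 := Real.sqrt_nonneg 2
  have hs1 : 1 ≤ Real.sqrt 2 := by nlinarith
  have key : 0 ≤ 2*s2 + f2 + 2*Real.sqrt 2*t := by
    rcases le_or_gt 0 t with ht | ht
    · nlinarith
    · have h4 : (2*Real.sqrt 2*t)^2 ≤ (2*s2+f2)^2 := by nlinarith [sq_nonneg (2*s2 - f2)]
      nlinarith [h4]
  have c1 : 0 ≤ (4 - 2*Real.sqrt 2) * (a2 + t) := mul_nonneg (by nlinarith) h1
  have c2 : 0 ≤ (2*Real.sqrt 2 - 2) * (a2 - γ^2*e2) := mul_nonneg (by nlinarith) (by linarith)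
  nlinarith [key, c1, c2]

lemma procrustes_core (X U : Matrix (Fin n) (Fin d) ℝ) (γ : ℝ)
    (hsym : (Xᵀ*U)ᵀ = Xᵀ*U)
    (hpsd : ∀ v : Fin d → ℝ, 0 ≤ v ⬝ᵥ (Xᵀ*U).mulVec v)
    (hG : ∀ v : Fin d → ℝ, γ^2 * (∑ i, (v i)^2) ≤ v ⬝ᵥ (Xᵀ*X).mulVec v) :
    2*(Real.sqrt 2 - 1)*γ^2 * frobSq (U - X) ≤ frobSq (U*Uᵀ - X*Xᵀ) := by
  set E := U - X with hE
  have hU : U = X + E := by rw [hE]; abel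
  have hsymS : (Xᵀ*E)ᵀ = Xᵀ*E := by
    have h1 : Xᵀ*E = Xᵀ*U - Xᵀ*X := by rw [hE, Matrix.mul_sub]
    rw [h1, Matrix.transpose_sub, hsym, Matrix.transpose_mul, Matrix.transpose_transpose]
  have hD : U*Uᵀ - X*Xᵀ = E*Xᵀ + X*Eᵀ + E*Eᵀ := by
    rw [hU, Matrix.transpose_add, Matrix.add_mul, Matrix.mul_add, Matrix.mul_add]
    abel
  rw [hD, frob_identity X E hsymS]
  have hI1 : 0 ≤ ((Xᵀ*X)*(Eᵀ*E)).trace + ((Xᵀ*E)*(Eᵀ*E)).trace := by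
    have hsum : (Xᵀ*X)*(Eᵀ*E) + (Xᵀ*E)*(Eᵀ*E) = (Xᵀ*U)*(Eᵀ*E) := by
      rw [← Matrix.add_mul, ← Matrix.mul_add, ← hU]
    have := quad_trace_nonneg (Xᵀ*U) E hpsd
    rw [← hsum, Matrix.trace_add] at this
    exact this
  have hI2 : γ^2 * frobSq E ≤ ((Xᵀ*X)*(Eᵀ*E)).trace := quad_trace_ge _ _ _ hG
  have hFsym : (Eᵀ*E)ᵀ = Eᵀ*E := by rw [Matrix.transpose_mul, Matrix.transpose_transpose]
  have hI3 : (((Xᵀ*E)*(Eᵀ*E)).trace)^2 ≤ frobSq (Xᵀ*E) * frobSq (Eᵀ*E) := by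
    rw [trace_mul_symm (Xᵀ*E) (Eᵀ*E) hFsym]
    exact frob_cauchy _ _
  exact core_arith _ _ _ _ _ _ hI1 hI2 hI3 (frobSq_nonneg _) (frobSq_nonneg _)

lemma procrustes (Zk Y : Matrix (Fin n) (Fin d) ℝ) (γ : ℝ)
    (hray : ∀ v : Fin d → ℝ, γ^2 * (∑ i, (v i)^2) ≤ v ⬝ᵥ ((Zk)ᵀ*Zk).mulVec v) :
    ∃ Q : Matrix (Fin d) (Fin d) ℝ, Qᵀ*Q = 1 ∧
      2*(Real.sqrt 2 - 1)*γ^2 * frobSq (Y - Zk*Q) ≤ frobSq (Y*Yᵀ - Zk*(Zk)ᵀ) := by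
  obtain ⟨Q, hQ, hsymN, hpsdN⟩ := exists_polar ((Zk)ᵀ * Y)
  refine ⟨Q, hQ, ?_⟩
  have hXU : (Zk*Q)ᵀ*Y = Qᵀ*((Zk)ᵀ*Y) := by
    rw [Matrix.transpose_mul, Matrix.mul_assoc]
  have hsym : ((Zk*Q)ᵀ*Y)ᵀ = (Zk*Q)ᵀ*Y := by rw [hXU]; exact hsymN
  have hpsd : ∀ v : Fin d → ℝ, 0 ≤ v ⬝ᵥ ((Zk*Q)ᵀ*Y).mulVec v := by
    intro v; rw [hXU]; exact hpsdN v
  have hG : ∀ v : Fin d → ℝ, γ^2 * (∑ i, (v i)^2) ≤ v ⬝ᵥ ((Zk*Q)ᵀ*(Zk*Q)).mulVec v := by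
    intro v
    have h1 : v ⬝ᵥ ((Zk*Q)ᵀ*(Zk*Q)).mulVec v = ((Zk*Q) *ᵥ v) ⬝ᵥ ((Zk*Q) *ᵥ v) :=
      (dot_mulVec_self' (Zk*Q) v).symm
    have h2 : (Zk*Q) *ᵥ v = Zk *ᵥ (Q *ᵥ v) := (Matrix.mulVec_mulVec v Zk Q).symm
    have h3 : (Q *ᵥ v) ⬝ᵥ (Q *ᵥ v) = v ⬝ᵥ v := by
      rw [dot_mulVec_self' Q v, hQ]
      simp [Matrix.one_mulVec]
    have h4 : ∑ i, ((Q *ᵥ v) i)^2 = ∑ i, (v i)^2 := by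
      rw [← dot_self_eq_sum, ← dot_self_eq_sum, h3]
    rw [h1, h2, dot_mulVec_self' Zk (Q *ᵥ v)]
    calc γ^2 * (∑ i, (v i)^2) = γ^2 * (∑ i, ((Q *ᵥ v) i)^2) := by rw [h4]
      _ ≤ _ := hray _
  have hcore := procrustes_core (Zk*Q) Y γ hsym hpsd hG
  have hXXt : (Zk*Q)*(Zk*Q)ᵀ = Zk*(Zk)ᵀ := by
    rw [Matrix.transpose_mul, Matrix.mul_assoc, ← Matrix.mul_assoc Q Qᵀ,
      mul_eq_one_comm.mp hQ, Matrix.one_mul]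
  rwa [hXXt] at hcore

end P4

/-- Display (tmean_lb) in the proof of Lemma 6: the coordinate-space error to the
coordinate target is controlled by the total squared error of the fitted means. -/
theorem stmt16 {n q d m : ℕ} (hn : 0 < n) (hq : 0 < q) (hd : 0 < d) (hm : 0 < m)
    (cB γZ : ℝ) (hcB : 0 < cB) (hγ : 0 < γZ)
    (b : Fin m → Fin q → ℝ)
    (Z : Fin m → Matrix (Fin n) (Fin d) ℝ)
    (What Wstar : Fin d → Matrix (Fin n) (Fin q) ℝ)
    (Qstar : Fin m → Matrix (Fin d) (Fin d) ℝ)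
    (hγZ : γZ ^ 2 = ⨅ k, eigMin ((Z k)ᵀ * Z k))
    (hBmin : cB * m / q ≤ eigMin ((designMat b)ᵀ * designMat b))
    (hQ : ∀ k, (Qstar k)ᵀ * Qstar k = 1)
    (hWstar : Wstar = times2 (fun k => Z k * Qstar k) (coordMap b))
    (hmin : ∀ Q' : Fin m → Matrix (Fin d) (Fin d) ℝ, (∀ k, (Q' k)ᵀ * Q' k = 1) →
      tFrobSq (fun r => What r - Wstar r) ≤
        tFrobSq (fun r => What r - times2 (fun k => Z k * Q' k) (coordMap b) r)) :
    tFrobSq (fun r => What r - Wstar r) ≤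
      (q / (2 * (Real.sqrt 2 - 1) * cB * m * γZ ^ 2)) *
        ∑ k, frobSq (bar2 What (b k) * (bar2 What (b k))ᵀ - Z k * (Z k)ᵀ) := by
  have hm' : (0:ℝ) < m := by exact_mod_cast hm
  have hq' : (0:ℝ) < q := by exact_mod_cast hq
  set B : Matrix (Fin m) (Fin q) ℝ := designMat b with hBdef
  set C : Matrix (Fin q) (Fin m) ℝ := coordMap b with hCdef
  set lam : ℝ := cB * m / q with hlamdef
  have hlam : 0 < lam := div_pos (mul_pos hcB hm') hq'
  -- Rayleigh bounds
  have hB : ∀ x : Fin q → ℝ, lam * (∑ j, (x j)^2) ≤ x ⬝ᵥ (Bᵀ * B) *ᵥ x :=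
    rayleigh_lb _ _ hBmin
  have hZray : ∀ k (v : Fin d → ℝ),
      γZ^2 * (∑ i, (v i)^2) ≤ v ⬝ᵥ ((Z k)ᵀ * Z k) *ᵥ v := by
    intro k
    refine rayleigh_lb _ _ ?_
    calc γZ^2 = ⨅ k, eigMin ((Z k)ᵀ * Z k) := hγZ
      _ ≤ eigMin ((Z k)ᵀ * Z k) := ciInf_le (Set.Finite.bddBelow (Set.finite_range _)) k
  -- invertibility of BᵀB
  have hpd : (Bᵀ * B).PosDef := by
    refine Matrix.PosDef.of_dotProduct_mulVec_pos (Matrix.isHermitian_conjTranspose_mul_self B) fun x hx => ?_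
    have hsum : 0 < ∑ j, (x j)^2 := by
      rcases Function.ne_iff.mp hx with ⟨j, hj⟩
      refine Finset.sum_pos' (fun j _ => sq_nonneg _) ⟨j, Finset.mem_univ j, ?_⟩
      have : x j ≠ 0 := hj
      positivity
    have h1 : 0 < lam * ∑ j, (x j)^2 := mul_pos hlam hsum
    have h2 := hB x
    calc (0:ℝ) < lam * ∑ j, (x j)^2 := h1
      _ ≤ x ⬝ᵥ (Bᵀ * B) *ᵥ x := h2
      _ = star x ⬝ᵥ (Bᵀ * B) *ᵥ x := by rw [star_trivial]
  have hdet : IsUnit (Bᵀ * B).det := isUnit_iff_ne_zero.mpr hpd.det_pos.ne'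
  have hInv1 : (Bᵀ * B)⁻¹ * (Bᵀ * B) = 1 := Matrix.nonsing_inv_mul _ hdet
  have hCB : C * B = 1 := by
    rw [hCdef, coordMap, ← hBdef, Matrix.mul_assoc, hInv1]
  have hPB : (B * C) * B = B := by
    rw [Matrix.mul_assoc, hCB, Matrix.mul_one]
  have hPsym : (B * C)ᵀ = B * C := by
    rw [hCdef, coordMap, ← hBdef]
    rw [Matrix.transpose_mul, Matrix.transpose_mul, Matrix.transpose_transpose,
      Matrix.transpose_nonsing_inv, Matrix.transpose_mul, Matrix.transpose_transpose]
    rw [Matrix.mul_assoc]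
  have hPP : (B * C) * (B * C) = B * C := by
    rw [← Matrix.mul_assoc, hPB]
  have hProj : ∀ u : Fin m → ℝ, ((B*C) *ᵥ u) ⬝ᵥ ((B*C) *ᵥ u) ≤ u ⬝ᵥ u := by
    intro u
    have e1 : ((B*C) *ᵥ u) ⬝ᵥ ((B*C) *ᵥ u) = u ⬝ᵥ ((B*C) *ᵥ u) := by
      rw [dot_mulVec_self', hPsym, hPP]
    have e2 : 0 ≤ (u - (B*C) *ᵥ u) ⬝ᵥ (u - (B*C) *ᵥ u) := by
      rw [dot_self_eq_sum]
      exact Finset.sum_nonneg fun _ _ => sq_nonneg _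
    rw [sub_dotProduct, dotProduct_sub, dotProduct_sub] at e2
    have e3 : ((B*C) *ᵥ u) ⬝ᵥ u = u ⬝ᵥ ((B*C) *ᵥ u) := dotProduct_comm _ _
    linarith [e1, e2, e3]
  -- per-snapshot Procrustes alignment
  have hchoice : ∀ k, ∃ Q : Matrix (Fin d) (Fin d) ℝ, Qᵀ*Q = 1 ∧
      2*(Real.sqrt 2 - 1)*γZ^2 * frobSq (bar2 What (b k) - Z k * Q) ≤
        frobSq (bar2 What (b k) * (bar2 What (b k))ᵀ - Z k * (Z k)ᵀ) :=
    fun k => procrustes (Z k) (bar2 What (b k)) γZ (hZray k)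
  choose Qt hQtO hQtB using hchoice
  -- step 0
  have h0 := hmin Qt hQtO
  -- step 1 : design-matrix bound
  have h1 : lam * tFrobSq (fun r => What r - times2 (fun k => Z k * Qt k) C r)
      ≤ ∑ k, frobSq (bar2 What (b k) - Z k * Qt k) := by
    have main : ∀ (r : Fin d) (i : Fin n),
        lam * (∑ j, ((What r - times2 (fun k => Z k * Qt k) C r) i j)^2)
        ≤ ∑ k, ((bar2 What (b k)) i r - (Z k * Qt k) i r)^2 := by
      intro r i
      set w : Fin q → ℝ := fun j => What r i j with hw
      set z : Fin m → ℝ := fun k => (Z k * Qt k) i r with hz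
      have hx : ∀ j, (What r - times2 (fun k => Z k * Qt k) C r) i j = (w - C *ᵥ z) j := by
        intro j
        simp only [Matrix.sub_apply, Pi.sub_apply, times2, Matrix.of_apply]
        rfl
      have hvec : B *ᵥ (w - C *ᵥ z) = (B*C) *ᵥ (B *ᵥ w - z) := by
        rw [Matrix.mulVec_sub, Matrix.mulVec_mulVec, Matrix.mulVec_sub,
          Matrix.mulVec_mulVec, hPB]
      have hfib : ∀ k, (B *ᵥ w) k = (bar2 What (b k)) i r := by
        intro k
        simp only [Matrix.mulVec, dotProduct, bar2, Matrix.of_apply, hBdef,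
          designMat, hw]
        exact Finset.sum_congr rfl fun j _ => mul_comm _ _
      calc lam * (∑ j, ((What r - times2 (fun k => Z k * Qt k) C r) i j)^2)
          = lam * (∑ j, ((w - C *ᵥ z) j)^2) := by
            congr 1
        _ ≤ (w - C *ᵥ z) ⬝ᵥ (Bᵀ * B) *ᵥ (w - C *ᵥ z) := hB _
        _ = (B *ᵥ (w - C *ᵥ z)) ⬝ᵥ (B *ᵥ (w - C *ᵥ z)) := (dot_mulVec_self' B _).symm
        _ = ((B*C) *ᵥ (B *ᵥ w - z)) ⬝ᵥ ((B*C) *ᵥ (B *ᵥ w - z)) := by rw [hvec]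
        _ ≤ (B *ᵥ w - z) ⬝ᵥ (B *ᵥ w - z) := hProj _
        _ = ∑ k, ((B *ᵥ w) k - z k)^2 := by
            rw [dot_self_eq_sum]
            exact Finset.sum_congr rfl fun k _ => by rw [Pi.sub_apply]
        _ = ∑ k, ((bar2 What (b k)) i r - (Z k * Qt k) i r)^2 :=
            Finset.sum_congr rfl fun k _ => by rw [hfib k, hz]
    calc lam * tFrobSq (fun r => What r - times2 (fun k => Z k * Qt k) C r)
        = ∑ r, ∑ i, lam * (∑ j, ((What r - times2 (fun k => Z k * Qt k) C r) i j)^2) := by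
          simp only [tFrobSq, frobSq, Finset.mul_sum]
      _ ≤ ∑ r, ∑ i, ∑ k, ((bar2 What (b k)) i r - (Z k * Qt k) i r)^2 :=
          Finset.sum_le_sum fun r _ => Finset.sum_le_sum fun i _ => main r i
      _ = ∑ r, ∑ k, ∑ i, ((bar2 What (b k)) i r - (Z k * Qt k) i r)^2 :=
          Finset.sum_congr rfl fun r _ => Finset.sum_comm
      _ = ∑ k, ∑ r, ∑ i, ((bar2 What (b k)) i r - (Z k * Qt k) i r)^2 := Finset.sum_comm
      _ = ∑ k, ∑ i, ∑ r, ((bar2 What (b k)) i r - (Z k * Qt k) i r)^2 :=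
          Finset.sum_congr rfl fun k _ => Finset.sum_comm
      _ = ∑ k, frobSq (bar2 What (b k) - Z k * Qt k) := by
          simp only [frobSq, Matrix.sub_apply]
  -- step 2 : Procrustes bound summed
  set κ : ℝ := 2*(Real.sqrt 2 - 1)*γZ^2 with hκdef
  have hs2 : 1 < Real.sqrt 2 := by
    nlinarith [Real.sq_sqrt (by norm_num : (0:ℝ) ≤ 2), Real.sqrt_nonneg 2]
  have hκ : 0 < κ := by
    rw [hκdef]
    have : 0 < Real.sqrt 2 - 1 := by linarith
    positivity
  have h2 : κ * (∑ k, frobSq (bar2 What (b k) - Z k * Qt k))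
      ≤ ∑ k, frobSq (bar2 What (b k) * (bar2 What (b k))ᵀ - Z k * (Z k)ᵀ) := by
    rw [Finset.mul_sum]
    exact Finset.sum_le_sum fun k _ => hQtB k
  -- combine
  set T := tFrobSq (fun r => What r - times2 (fun k => Z k * Qt k) C r) with hT
  set S1 := ∑ k, frobSq (bar2 What (b k) - Z k * Qt k) with hS1
  set R := ∑ k, frobSq (bar2 What (b k) * (bar2 What (b k))ᵀ - Z k * (Z k)ᵀ) with hR
  have hTle : T ≤ S1 / lam := (le_div_iff₀ hlam).mpr (by linarith [h1])
  have hS1le : S1 ≤ R / κ := (le_div_iff₀ hκ).mpr (by linarith [h2])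
  have hchain : tFrobSq (fun r => What r - Wstar r) ≤ (R / κ) / lam := by
    calc tFrobSq (fun r => What r - Wstar r) ≤ T := h0
      _ ≤ S1 / lam := hTle
      _ ≤ (R / κ) / lam := (div_le_div_iff_of_pos_right hlam).mpr hS1le
  have hconst : (R / κ) / lam = (q / (2 * (Real.sqrt 2 - 1) * cB * m * γZ ^ 2)) * R := by
    rw [hκdef, hlamdef]
    have h1' : Real.sqrt 2 - 1 ≠ 0 := by linarith
    have h2' : γZ ≠ 0 := ne_of_gt hγ
    have h3' : cB ≠ 0 := ne_of_gt hcB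
    have h4' : (m:ℝ) ≠ 0 := ne_of_gt hm'
    have h5' : (q:ℝ) ≠ 0 := ne_of_gt hq'
    field_simp
  rw [← hconst]
  exact hchain
end
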